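/- Let θ be a dendrogram over a finite set X, i.e., an order-preserving right-continuous map ℝ≥0 → Part(X) with θ(0) the discrete partition and θ(t) = {X} for large t. Define u_θ(x,x') = min{t : x ∼_{θ(t)} x'}. Then u_θ is an ultrametric on X: u_θ(x,x'') ≤ max{u_θ(x,x'), u_θ(x',x'')} for all x, x', x'' ∈ X, u_θ is symmetric, and u_θ(x,x') = 0 iff x = x'. -/

import Mathlib

lemma dendro_attain {X : Type*} (θ : NNReal → Setoid X) (hmono : Monotone θ)
    (hrc : ∀ t : NNReal, ∃ ε : NNReal, 0 < ε ∧
      ∀ s : NNReal, t ≤ s → s ≤ t + ε → θ s = θ t)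
    (x x' : X) (hne : {t : NNReal | (θ t).r x x'}.Nonempty) :
    (θ (sInf {t : NNReal | (θ t).r x x'})).r x x' := by
  set S := {t : NNReal | (θ t).r x x'} with hS
  obtain ⟨ε, hε, hconst⟩ := hrc (sInf S)
  obtain ⟨s, hsS, hslt⟩ := exists_lt_of_csInf_lt hne (lt_add_of_pos_right (sInf S) hε)
  have h1 : θ s = θ (sInf S) := hconst s (csInf_le (OrderBot.bddBelow S) hsS) hslt.le
  have := hsS
  rwa [hS, Set.mem_setOf_eq, h1] at this

/-- For a dendrogram `θ` over a finite set `X` — modelled as a monotone family of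
partitions (equivalence relations, i.e. `Setoid`s, ordered by refinement) indexed by
`[0,∞)`, with `θ(0)` the discrete partition, `θ(t) = {X}` for all large `t`, and
right-continuity — the function `u_θ(x,x') = inf{t : x ∼_{θ(t)} x'}` is an
ultrametric on `X`: it satisfies the ultra-triangle inequality, is symmetric, and
vanishes exactly on the diagonal. -/
theorem dendrogram_ultrametric {X : Type*} [Finite X] (θ : NNReal → Setoid X)
    (hmono : Monotone θ) (h0 : θ 0 = ⊥)
    (hT : ∃ T : NNReal, 0 < T ∧ ∀ t : NNReal, T ≤ t → θ t = ⊤)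
    (hrc : ∀ t : NNReal, ∃ ε : NNReal, 0 < ε ∧
      ∀ s : NNReal, t ≤ s → s ≤ t + ε → θ s = θ t) :
    (∀ x x' x'' : X,
      sInf {t : NNReal | (θ t).r x x''} ≤
        max (sInf {t : NNReal | (θ t).r x x'}) (sInf {t : NNReal | (θ t).r x' x''})) ∧
    (∀ x x' : X, sInf {t : NNReal | (θ t).r x x'} = sInf {t : NNReal | (θ t).r x' x}) ∧
    (∀ x x' : X, sInf {t : NNReal | (θ t).r x x'} = 0 ↔ x = x') := by
  obtain ⟨T, hTpos, hTtop⟩ := hT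
  have hne : ∀ x x' : X, {t : NNReal | (θ t).r x x'}.Nonempty := by
    intro x x'
    exact ⟨T, by show (θ T).r x x'; rw [hTtop T le_rfl, Setoid.top_def]; exact trivial⟩
  have hatt := fun x x' => dendro_attain θ hmono hrc x x' (hne x x')
  refine ⟨?_, ?_, ?_⟩
  · intro x x' x''
    set a := sInf {t : NNReal | (θ t).r x x'}
    set b := sInf {t : NNReal | (θ t).r x' x''}
    have h1 : (θ (max a b)).r x x' := hmono (le_max_left a b) (hatt x x')
    have h2 : (θ (max a b)).r x' x'' := hmono (le_max_right a b) (hatt x' x'')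
    exact csInf_le (OrderBot.bddBelow _) ((θ (max a b)).trans' h1 h2)
  · intro x x'
    congr 1
    ext t
    exact ⟨fun h => (θ t).symm' h, fun h => (θ t).symm' h⟩
  · intro x x'
    constructor
    · intro h
      have := hatt x x'
      rw [h, h0] at this
      exact this
    · rintro rfl
      refine le_antisymm (csInf_le (OrderBot.bddBelow _) ?_) zero_le
      exact (θ 0).refl' x
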